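/- arXiv:math-ph/0104017 — 2 statements merged into one kernel-verified Lean document; each statement's English description precedes it below -/
import Mathlib

section
/- Every ℕ-graded connected bialgebra H over k is a Hopf algebra: there exists a k-linear map S: H→H satisfying m∘(id⊗S)∘Δ = m∘(S⊗id)∘Δ = 1·ε (S is a two-sided convolution inverse of the identity of H). -/
open TensorProduct DirectSum

/-- The submodule `A ⊗ B` of `H ⊗ H` spanned by the pure tensors `a ⊗ b` with `a ∈ A`,
`b ∈ B`. -/
noncomputable def tensorSub {R H : Type*} [CommSemiring R] [AddCommMonoid H] [Module R H]
    (A B : Submodule R H) : Submodule R (H ⊗[R] H) :=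
  Submodule.span R {z : H ⊗[R] H | ∃ a ∈ A, ∃ b ∈ B, z = a ⊗ₜ[R] b}

section ConvAux

variable {R H : Type*} [CommRing R] [Ring H] [Bialgebra R H]

/-- Convolution product on `H →ₗ[R] H`. -/
noncomputable def conv (f g : H →ₗ[R] H) : H →ₗ[R] H :=
  LinearMap.mul' R H ∘ₗ TensorProduct.map f g ∘ₗ Coalgebra.comul

/-- The convolution unit `η ∘ ε`. -/
noncomputable def uep : H →ₗ[R] H :=
  Algebra.linearMap R H ∘ₗ Coalgebra.counit

lemma conv_apply (f g : H →ₗ[R] H) (x : H) :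
    conv f g x = LinearMap.mul' R H (TensorProduct.map f g (Coalgebra.comul x)) := rfl

lemma conv_add_left (f g h : H →ₗ[R] H) : conv (f + g) h = conv f h + conv g h := by
  unfold conv
  rw [TensorProduct.map_add_left, LinearMap.add_comp, LinearMap.comp_add]

lemma conv_add_right (f g h : H →ₗ[R] H) : conv f (g + h) = conv f g + conv f h := by
  unfold conv
  rw [TensorProduct.map_add_right, LinearMap.add_comp, LinearMap.comp_add]

lemma conv_smul_right (c : R) (f g : H →ₗ[R] H) : conv f (c • g) = c • conv f g := by
  unfold conv
  rw [TensorProduct.map_smul_right, LinearMap.smul_comp, LinearMap.comp_smul]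

lemma conv_smul_left (c : R) (f g : H →ₗ[R] H) : conv (c • f) g = c • conv f g := by
  unfold conv
  rw [TensorProduct.map_smul_left, LinearMap.smul_comp, LinearMap.comp_smul]

lemma conv_sum_right {ι : Type*} (f : H →ₗ[R] H) (s : Finset ι) (g : ι → (H →ₗ[R] H)) :
    conv f (∑ i ∈ s, g i) = ∑ i ∈ s, conv f (g i) := by
  classical
  induction s using Finset.induction_on with
  | empty =>
      simp only [Finset.sum_empty]
      unfold conv
      rw [show (0 : H →ₗ[R] H) = (0 : R) • 0 by simp, TensorProduct.map_smul_right]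
      simp
  | @insert a s hnot ih =>
      rw [Finset.sum_insert hnot, Finset.sum_insert hnot, conv_add_right, ih]

lemma conv_sum_left {ι : Type*} (f : H →ₗ[R] H) (s : Finset ι) (g : ι → (H →ₗ[R] H)) :
    conv (∑ i ∈ s, g i) f = ∑ i ∈ s, conv (g i) f := by
  classical
  induction s using Finset.induction_on with
  | empty =>
      simp only [Finset.sum_empty]
      unfold conv
      rw [show (0 : H →ₗ[R] H) = (0 : R) • 0 by simp, TensorProduct.map_smul_left]
      simp
  | @insert a s hnot ih =>
      rw [Finset.sum_insert hnot, Finset.sum_insert hnot, conv_add_left, ih]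

lemma conv_uep_left (f : H →ₗ[R] H) : conv uep f = f := by
  have h1 : TensorProduct.map (uep : H →ₗ[R] H) f =
      (TensorProduct.map (Algebra.linearMap R H) f) ∘ₗ
        (Coalgebra.counit (R := R) (A := H)).rTensor H := by
    apply TensorProduct.ext'
    intro x y
    simp [uep, LinearMap.rTensor_tmul]
  ext x
  rw [conv_apply, h1]
  simp only [LinearMap.comp_apply]
  rw [Coalgebra.rTensor_counit_comul]
  simp [LinearMap.mul'_apply]

lemma conv_uep_right (f : H →ₗ[R] H) : conv f uep = f := by
  have h1 : TensorProduct.map f (uep : H →ₗ[R] H) =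
      (TensorProduct.map f (Algebra.linearMap R H)) ∘ₗ
        (Coalgebra.counit (R := R) (A := H)).lTensor H := by
    apply TensorProduct.ext'
    intro x y
    simp [uep, LinearMap.lTensor_tmul]
  ext x
  rw [conv_apply, h1]
  simp only [LinearMap.comp_apply]
  rw [Coalgebra.lTensor_counit_comul]
  simp [LinearMap.mul'_apply]

lemma mul'_assoc_aux :
    (LinearMap.mul' R H ∘ₗ TensorProduct.map (LinearMap.mul' R H) LinearMap.id :
      (H ⊗[R] H) ⊗[R] H →ₗ[R] H) =
    LinearMap.mul' R H ∘ₗ TensorProduct.map LinearMap.id (LinearMap.mul' R H) ∘ₗ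
      (TensorProduct.assoc R H H H).toLinearMap := by
  apply TensorProduct.ext_threefold
  intro x y z
  simp [LinearMap.mul'_apply, mul_assoc]

lemma map_comp_three {M₁ M₂ M₃ N₁ N₂ N₃ : Type*}
    [AddCommMonoid M₁] [AddCommMonoid M₂] [AddCommMonoid M₃]
    [AddCommMonoid N₁] [AddCommMonoid N₂] [AddCommMonoid N₃]
    [Module R M₁] [Module R M₂] [Module R M₃]
    [Module R N₁] [Module R N₂] [Module R N₃]
    (f₂ : M₂ →ₗ[R] M₃) (f₁ : M₁ →ₗ[R] M₂) (g₂ : N₂ →ₗ[R] N₃) (g₁ : N₁ →ₗ[R] N₂) :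
    TensorProduct.map (f₂ ∘ₗ f₁) (g₂ ∘ₗ g₁) =
      TensorProduct.map f₂ g₂ ∘ₗ TensorProduct.map f₁ g₁ := by
  apply TensorProduct.ext'
  intro x y
  simp

lemma conv_assoc (f g h : H →ₗ[R] H) : conv (conv f g) h = conv f (conv g h) := by
  ext x
  have e1 : TensorProduct.map (conv f g) h =
      TensorProduct.map (LinearMap.mul' R H) LinearMap.id ∘ₗ
        TensorProduct.map (TensorProduct.map f g) h ∘ₗ
        (Coalgebra.comul (R := R) (A := H)).rTensor H := by
    unfold conv
    rw [show (h : H →ₗ[R] H) = (LinearMap.id ∘ₗ h) ∘ₗ LinearMap.id by ext; simp,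
      map_comp_three]
    rw [show (Coalgebra.comul (R := R) (A := H)).rTensor H =
      TensorProduct.map Coalgebra.comul LinearMap.id from rfl]
    ext; simp
  have e2 : TensorProduct.map f (conv g h) =
      TensorProduct.map LinearMap.id (LinearMap.mul' R H) ∘ₗ
        TensorProduct.map f (TensorProduct.map g h) ∘ₗ
        (Coalgebra.comul (R := R) (A := H)).lTensor H := by
    unfold conv
    rw [show (f : H →ₗ[R] H) = (LinearMap.id ∘ₗ f) ∘ₗ LinearMap.id by ext; simp,
      map_comp_three]
    rw [show (Coalgebra.comul (R := R) (A := H)).lTensor H =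
      TensorProduct.map LinearMap.id Coalgebra.comul from rfl]
    ext; simp
  rw [conv_apply, conv_apply, e1, e2]
  simp only [LinearMap.comp_apply]
  have hma := LinearMap.congr_fun (mul'_assoc_aux (R := R) (H := H))
    (TensorProduct.map (TensorProduct.map f g) h
      ((Coalgebra.comul (R := R) (A := H)).rTensor H (Coalgebra.comul x)))
  simp only [LinearMap.comp_apply, LinearEquiv.coe_coe] at hma
  rw [hma, ← TensorProduct.map_map_assoc f g h
    ((Coalgebra.comul (R := R) (A := H)).rTensor H (Coalgebra.comul x)),
    Coalgebra.coassoc_apply x]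

/-- Convolution powers. -/
noncomputable def cpow (f : H →ₗ[R] H) : ℕ → (H →ₗ[R] H)
  | 0 => uep
  | (m + 1) => conv f (cpow f m)

lemma cpow_succ_right (f : H →ₗ[R] H) (m : ℕ) :
    cpow f (m + 1) = conv (cpow f m) f := by
  induction m with
  | zero => show conv f uep = conv uep f; rw [conv_uep_left, conv_uep_right]
  | succ m ih =>
      show conv f (cpow f (m + 1)) = conv (conv f (cpow f m)) f
      rw [conv_assoc, ← ih]

end ConvAux

/-- Every ℕ-graded connected bialgebra `H` over a field of characteristic zero is a Hopf
algebra: there is a `k`-linear map `S : H → H` with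
`m ∘ (id ⊗ S) ∘ Δ = m ∘ (S ⊗ id) ∘ Δ = 1·ε`, i.e. `S` is a two-sided convolution inverse of
the identity of `H`. -/
theorem graded_connected_bialgebra_is_hopf
    {R H : Type*} [Field R] [CharZero R] [Ring H] [Bialgebra R H]
    (𝒜 : ℕ → Submodule R H)
    (hdirect : DirectSum.IsInternal 𝒜)
    (hmul : ∀ (p q : ℕ), ∀ a ∈ 𝒜 p, ∀ b ∈ 𝒜 q, a * b ∈ 𝒜 (p + q))
    (hcomul : ∀ n : ℕ, ∀ x ∈ 𝒜 n,
      Coalgebra.comul (R := R) x ∈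
        ⨆ (p : ℕ × ℕ) (_ : p.1 + p.2 = n), tensorSub (𝒜 p.1) (𝒜 p.2))
    (hconn : 𝒜 0 = Submodule.span R {(1 : H)}) :
    ∃ S : H →ₗ[R] H,
      LinearMap.mul' R H ∘ₗ TensorProduct.map LinearMap.id S ∘ₗ Coalgebra.comul =
        Algebra.linearMap R H ∘ₗ Coalgebra.counit ∧
      LinearMap.mul' R H ∘ₗ TensorProduct.map S LinearMap.id ∘ₗ Coalgebra.comul =
        Algebra.linearMap R H ∘ₗ Coalgebra.counit := by
  classical
  set f : H →ₗ[R] H := LinearMap.id - uep with hf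
  -- f kills degree 0
  have hf0 : ∀ x ∈ 𝒜 0, f x = 0 := by
    intro x hx
    rw [hconn, Submodule.mem_span_singleton] at hx
    obtain ⟨c, rfl⟩ := hx
    have hcu : Coalgebra.counit (R := R) (c • (1 : H)) = c • (1 : R) := by
      rw [map_smul, Bialgebra.counit_one]
    simp [hf, uep, hcu, Algebra.algebraMap_eq_smul_one]
  -- nilpotency of convolution powers of f on the grading
  have hnil : ∀ m n : ℕ, n < m → ∀ x ∈ 𝒜 n, cpow f m x = 0 := by
    intro m
    induction m with
    | zero => intro n hn x _; exact absurd hn (Nat.not_lt_zero n)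
    | succ m ih =>
        intro n hn x hx
        show conv f (cpow f m) x = 0
        rw [conv_apply]
        set g : H ⊗[R] H →ₗ[R] H :=
          LinearMap.mul' R H ∘ₗ TensorProduct.map f (cpow f m) with hg
        show g (Coalgebra.comul x) = 0
        rw [← LinearMap.mem_ker]
        refine SetLike.le_def.mp ?_ (hcomul n x hx)
        refine iSup_le fun p => iSup_le fun hp => ?_
        rw [tensorSub, Submodule.span_le]
        rintro z ⟨a, ha, b, hb, rfl⟩
        simp only [SetLike.mem_coe, LinearMap.mem_ker, hg, LinearMap.comp_apply,
          TensorProduct.map_tmul]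
        rcases Nat.eq_zero_or_pos p.1 with h1 | h1
        · rw [h1] at ha
          rw [hf0 a ha, TensorProduct.zero_tmul, map_zero]
        · have hq : p.2 < m := by omega
          rw [ih p.2 hq b hb, TensorProduct.tmul_zero, map_zero]
  -- the truncated antipodes
  set Sfun : ℕ → (H →ₗ[R] H) :=
    fun n => ∑ m ∈ Finset.range (n + 1), ((-1 : R) ^ m) • cpow f m with hSfun
  -- stability
  have hstab : ∀ q n : ℕ, q ≤ n → ∀ x ∈ 𝒜 q, Sfun n x = Sfun q x := by
    intro q n hqn x hx
    simp only [hSfun, LinearMap.sum_apply, LinearMap.smul_apply]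
    refine (Finset.sum_subset (Finset.range_subset_range.2 (by omega)) ?_).symm
    intro m _ hm
    rw [Finset.mem_range, not_lt] at hm
    rw [hnil m q (by omega) x hx, smul_zero]
  -- left identity: conv id (Sfun n) = uep + (-1)^n • cpow f (n+1)
  have hid : (LinearMap.id : H →ₗ[R] H) = uep + f := by rw [hf]; abel
  have htel : ∀ n : ℕ,
      (Sfun n + ∑ m ∈ Finset.range (n + 1), ((-1 : R) ^ m) • cpow f (m + 1)) =
        uep + ((-1 : R) ^ n) • cpow f (n + 1) := by
    intro n
    have : Sfun n + ∑ m ∈ Finset.range (n + 1), ((-1 : R) ^ m) • cpow f (m + 1) =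
        ∑ m ∈ Finset.range (n + 1),
          (((-1 : R) ^ m) • cpow f m - ((-1 : R) ^ (m + 1)) • cpow f (m + 1)) := by
      rw [hSfun]
      rw [← Finset.sum_add_distrib]
      congr 1
      ext m : 1
      rw [pow_succ]
      module
    rw [this, Finset.sum_range_sub' (fun m => ((-1 : R) ^ m) • cpow f m)]
    simp only [pow_zero, one_smul, show cpow f 0 = (uep : H →ₗ[R] H) from rfl, pow_succ]
    module
  have hleft : ∀ n : ℕ,
      conv LinearMap.id (Sfun n) = uep + ((-1 : R) ^ n) • cpow f (n + 1) := by
    intro n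
    rw [hid, conv_add_left, conv_uep_left, hSfun, conv_sum_right]
    have : ∀ m, conv f (((-1 : R) ^ m) • cpow f m) = ((-1 : R) ^ m) • cpow f (m + 1) := by
      intro m; rw [conv_smul_right]; rfl
    simp only [this]
    exact htel n
  have hright : ∀ n : ℕ,
      conv (Sfun n) LinearMap.id = uep + ((-1 : R) ^ n) • cpow f (n + 1) := by
    intro n
    rw [hid, conv_add_right, conv_uep_right, hSfun, conv_sum_left]
    have : ∀ m, conv (((-1 : R) ^ m) • cpow f m) f = ((-1 : R) ^ m) • cpow f (m + 1) := by
      intro m; rw [conv_smul_left, cpow_succ_right]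
    simp only [this]
    exact htel n
  -- define S via the internal direct sum
  set e : (⨁ n, 𝒜 n) ≃ₗ[R] H :=
    LinearEquiv.ofBijective (DirectSum.coeLinearMap 𝒜) hdirect with he
  set S : H →ₗ[R] H :=
    (DirectSum.toModule R ℕ H (fun n => Sfun n ∘ₗ (𝒜 n).subtype)) ∘ₗ (e.symm : H →ₗ[R] (⨁ n, 𝒜 n)) with hS
  have hSval : ∀ n : ℕ, ∀ x ∈ 𝒜 n, S x = Sfun n x := by
    intro n x hx
    have h1 : e (DirectSum.of (fun n => 𝒜 n) n ⟨x, hx⟩) = x := by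
      rw [he]
      exact DirectSum.coeLinearMap_of 𝒜 n ⟨x, hx⟩
    have h2 : e.symm x = DirectSum.of (fun n => 𝒜 n) n ⟨x, hx⟩ :=
      (LinearEquiv.symm_apply_eq e).mpr h1.symm
    rw [hS]
    simp only [LinearMap.comp_apply, LinearEquiv.coe_coe, h2]
    rw [← DirectSum.lof_eq_of R, DirectSum.toModule_lof]
    rfl
  refine ⟨S, ?_, ?_⟩
  · -- left antipode identity
    have key : ∀ n : ℕ, ∀ x ∈ 𝒜 n,
        (LinearMap.mul' R H ∘ₗ TensorProduct.map LinearMap.id S ∘ₗ Coalgebra.comul) x =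
          uep (R := R) x := by
      intro n x hx
      have heq : (LinearMap.mul' R H ∘ₗ TensorProduct.map LinearMap.id S)
            (Coalgebra.comul (R := R) x) =
          (LinearMap.mul' R H ∘ₗ TensorProduct.map LinearMap.id (Sfun n))
            (Coalgebra.comul (R := R) x) := by
        have hsub : (⨆ (p : ℕ × ℕ) (_ : p.1 + p.2 = n), tensorSub (𝒜 p.1) (𝒜 p.2)) ≤
            LinearMap.eqLocus (LinearMap.mul' R H ∘ₗ TensorProduct.map LinearMap.id S)
              (LinearMap.mul' R H ∘ₗ TensorProduct.map LinearMap.id (Sfun n)) := by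
          refine iSup_le fun p => iSup_le fun hp => ?_
          rw [tensorSub, Submodule.span_le]
          rintro z ⟨a, ha, b, hb, rfl⟩
          simp only [SetLike.mem_coe, LinearMap.mem_eqLocus, LinearMap.comp_apply,
            TensorProduct.map_tmul, LinearMap.id_coe, id_eq]
          rw [hSval p.2 b hb, hstab p.2 n (by omega) b hb]
        exact hsub (hcomul n x hx)
      have := LinearMap.congr_fun (hleft n) x
      rw [conv_apply] at this
      simp only [LinearMap.comp_apply] at heq ⊢
      rw [heq, this]
      simp only [LinearMap.add_apply, LinearMap.smul_apply]
      rw [hnil (n + 1) n (by omega) x hx, smul_zero, add_zero]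
    -- extend over the grading
    apply LinearMap.ext
    intro x
    have hx : x ∈ (⊤ : Submodule R H) := trivial
    rw [← hdirect.submodule_iSup_eq_top] at hx
    have hle : (⨆ n, 𝒜 n) ≤
        LinearMap.eqLocus
          (LinearMap.mul' R H ∘ₗ TensorProduct.map LinearMap.id S ∘ₗ Coalgebra.comul)
          (Algebra.linearMap R H ∘ₗ Coalgebra.counit) :=
      iSup_le fun n y hy => key n y hy
    exact hle hx
  · -- right antipode identity
    have key : ∀ n : ℕ, ∀ x ∈ 𝒜 n,
        (LinearMap.mul' R H ∘ₗ TensorProduct.map S LinearMap.id ∘ₗ Coalgebra.comul) x =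
          uep (R := R) x := by
      intro n x hx
      have heq : (LinearMap.mul' R H ∘ₗ TensorProduct.map S LinearMap.id)
            (Coalgebra.comul (R := R) x) =
          (LinearMap.mul' R H ∘ₗ TensorProduct.map (Sfun n) LinearMap.id)
            (Coalgebra.comul (R := R) x) := by
        have hsub : (⨆ (p : ℕ × ℕ) (_ : p.1 + p.2 = n), tensorSub (𝒜 p.1) (𝒜 p.2)) ≤
            LinearMap.eqLocus (LinearMap.mul' R H ∘ₗ TensorProduct.map S LinearMap.id)
              (LinearMap.mul' R H ∘ₗ TensorProduct.map (Sfun n) LinearMap.id) := by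
          refine iSup_le fun p => iSup_le fun hp => ?_
          rw [tensorSub, Submodule.span_le]
          rintro z ⟨a, ha, b, hb, rfl⟩
          simp only [SetLike.mem_coe, LinearMap.mem_eqLocus, LinearMap.comp_apply,
            TensorProduct.map_tmul, LinearMap.id_coe, id_eq]
          rw [hSval p.1 a ha, hstab p.1 n (by omega) a ha]
        exact hsub (hcomul n x hx)
      have := LinearMap.congr_fun (hright n) x
      rw [conv_apply] at this
      simp only [LinearMap.comp_apply] at heq ⊢
      rw [heq, this]
      simp only [LinearMap.add_apply, LinearMap.smul_apply]
      rw [hnil (n + 1) n (by omega) x hx, smul_zero, add_zero]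
    apply LinearMap.ext
    intro x
    have hx : x ∈ (⊤ : Submodule R H) := trivial
    rw [← hdirect.submodule_iSup_eq_top] at hx
    have hle : (⨆ n, 𝒜 n) ≤
        LinearMap.eqLocus
          (LinearMap.mul' R H ∘ₗ TensorProduct.map S LinearMap.id ∘ₗ Coalgebra.comul)
          (Algebra.linearMap R H ∘ₗ Coalgebra.counit) :=
      iSup_le fun n y hy => key n y hy
    exact hle hx
end

section
/- Algebraic Birkhoff decomposition: let H be a commutative ℕ-graded connected Hopf algebra over k, let A = A_− ⊕ A_+ be a Birkhoff sum, and let φ: H → A be a unital k-algebra homomorphism. Then there exist unital k-algebra homomorphisms φ_−, φ_+: H → A such that φ_−(h) ∈ A_− and φ_+(h) ∈ A_+ for every h ∈ Ker ε, and φ = φ_−^{*−1} * φ_+, where * is the convolution product on algebra homomorphisms H→A, (ψ*ψ')(h) = m_A(ψ⊗ψ')(Δh), and φ_−^{*−1} = φ_−∘S is the convolution inverse of φ_−; moreover φ_+ = φ_− * φ, and φ_− is determined by φ_−(1)=1_A and φ_−(h) = −T[φ(h) + Σ φ_−(h')φ(h'')] for h ∈ Ker ε, where Δh = h⊗1 +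 1⊗h + Σ h'⊗h''. -/
set_option linter.unusedSectionVars false
set_option maxHeartbeats 1000000

open TensorProduct

/-- The convolution product on linear maps from a coalgebra `H` to an algebra `A`:
`(ψ * ψ')(h) = m_A ((ψ ⊗ ψ')(Δ h))`. -/
noncomputable def convA {R H A : Type*} [CommSemiring R] [AddCommMonoid H] [Module R H]
    [Coalgebra R H] [Semiring A] [Algebra R A] (ψ ψ' : H →ₗ[R] A) : H →ₗ[R] A :=
  LinearMap.mul' R A ∘ₗ TensorProduct.map ψ ψ' ∘ₗ Coalgebra.comul

namespace Birkhoff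

open Coalgebra HopfAlgebra

section MapHelpers

variable {R : Type*} [CommSemiring R]
variable {M₁ M₂ M₃ N₁ N₂ N₃ : Type*}
  [AddCommMonoid M₁] [AddCommMonoid M₂] [AddCommMonoid M₃]
  [AddCommMonoid N₁] [AddCommMonoid N₂] [AddCommMonoid N₃]
  [Module R M₁] [Module R M₂] [Module R M₃] [Module R N₁] [Module R N₂] [Module R N₃]

lemma map_split_l (a : M₂ →ₗ[R] M₃) (b : M₁ →ₗ[R] M₂) (c : N₁ →ₗ[R] N₂) (t : M₁ ⊗[R] N₁) :
    TensorProduct.map (a ∘ₗ b) c t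
      = TensorProduct.map a LinearMap.id (TensorProduct.map b c t) := by
  rw [← LinearMap.comp_apply, ← TensorProduct.map_comp, LinearMap.id_comp]

lemma map_split_l2 (a : M₂ →ₗ[R] M₃) (b : M₁ →ₗ[R] M₂) (c : N₁ →ₗ[R] N₂) (t : M₁ ⊗[R] N₁) :
    TensorProduct.map (a ∘ₗ b) c t
      = TensorProduct.map a c (TensorProduct.map b LinearMap.id t) := by
  rw [← LinearMap.comp_apply, ← TensorProduct.map_comp, LinearMap.comp_id]

lemma map_split_r (c : M₁ →ₗ[R] M₂) (a : N₂ →ₗ[R] N₃) (b : N₁ →ₗ[R] N₂) (t : M₁ ⊗[R] N₁) :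
    TensorProduct.map c (a ∘ₗ b) t
      = TensorProduct.map LinearMap.id a (TensorProduct.map c b t) := by
  rw [← LinearMap.comp_apply, ← TensorProduct.map_comp, LinearMap.id_comp]

lemma map_split_ab (a : M₁ →ₗ[R] M₂) (b : N₁ →ₗ[R] N₂) (t : M₁ ⊗[R] N₁) :
    TensorProduct.map a b t
      = TensorProduct.map a LinearMap.id (TensorProduct.map LinearMap.id b t) := by
  rw [← LinearMap.comp_apply, ← TensorProduct.map_comp, LinearMap.comp_id, LinearMap.id_comp]

lemma map_merge (a : M₁ →ₗ[R] M₂) (b : N₁ →ₗ[R] N₂) (t : M₁ ⊗[R] N₁) :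
    TensorProduct.map LinearMap.id b (TensorProduct.map a LinearMap.id t)
      = TensorProduct.map a b t := by
  rw [← LinearMap.comp_apply, ← TensorProduct.map_comp, LinearMap.comp_id, LinearMap.id_comp]

end MapHelpers

section Conv

variable {R H A : Type*} [CommSemiring R] [AddCommMonoid H] [Module R H] [Coalgebra R H]
  [CommSemiring A] [Algebra R A]

/-- associativity of multiplication, in tensor form. -/
lemma mul'_assoc_pt (u : A ⊗[R] (A ⊗[R] A)) :
    LinearMap.mul' R A (TensorProduct.map (LinearMap.mul' R A) LinearMap.id
        ((TensorProduct.assoc R A A A).symm u)) =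
      LinearMap.mul' R A (TensorProduct.map LinearMap.id (LinearMap.mul' R A) u) := by
  have h : (LinearMap.mul' R A ∘ₗ TensorProduct.map (LinearMap.mul' R A) LinearMap.id ∘ₗ
        (TensorProduct.assoc R A A A).symm.toLinearMap : A ⊗[R] (A ⊗[R] A) →ₗ[R] A)
      = LinearMap.mul' R A ∘ₗ TensorProduct.map LinearMap.id (LinearMap.mul' R A) := by
    apply LinearMap.ext
    intro t
    induction t using TensorProduct.induction_on with
    | zero => simp
    | tmul x yz =>
      induction yz using TensorProduct.induction_on with
      | zero => simp [tmul_zero]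
      | tmul y z => simp [mul_assoc]
      | add u v hu hv =>
        simp only [tmul_add, map_add, hu, hv]
    | add u v hu hv => simp only [map_add, hu, hv]
  exact LinearMap.congr_fun h u

lemma convA_assoc (f g h : H →ₗ[R] A) :
    convA (convA f g) h = convA f (convA g h) := by
  apply LinearMap.ext
  intro x
  have hco : LinearMap.rTensor H (Coalgebra.comul (R := R) (A := H)) (Coalgebra.comul x)
      = (TensorProduct.assoc R H H H).symm
          (LinearMap.lTensor H Coalgebra.comul (Coalgebra.comul x)) := by
    rw [LinearEquiv.eq_symm_apply]
    exact Coalgebra.coassoc_apply x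
  simp only [convA, LinearMap.comp_apply]
  rw [map_split_l (LinearMap.mul' R A) (TensorProduct.map f g ∘ₗ Coalgebra.comul) h,
    map_split_l2 (TensorProduct.map f g) Coalgebra.comul h]
  rw [show (TensorProduct.map Coalgebra.comul LinearMap.id (Coalgebra.comul x) : (H ⊗[R] H) ⊗[R] H)
      = LinearMap.rTensor H Coalgebra.comul (Coalgebra.comul x) from rfl, hco]
  rw [TensorProduct.map_map_assoc_symm f g h]
  rw [mul'_assoc_pt]
  rw [map_split_r f (LinearMap.mul' R A) (TensorProduct.map g h ∘ₗ Coalgebra.comul),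
    map_split_r f (TensorProduct.map g h) Coalgebra.comul]
  rw [map_split_ab f Coalgebra.comul, map_merge]
  rfl

lemma mul'_map_algHom_pt {B C : Type*} [Semiring B] [Algebra R B] [Semiring C] [Algebra R C]
    (f : B →ₐ[R] A) (g : C →ₐ[R] A) (t : B ⊗[R] C) :
    LinearMap.mul' R A (TensorProduct.map f.toLinearMap g.toLinearMap t)
      = Algebra.TensorProduct.productMap f g t := by
  have h : LinearMap.mul' R A ∘ₗ TensorProduct.map f.toLinearMap g.toLinearMap
      = (Algebra.TensorProduct.productMap f g).toLinearMap :=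
    TensorProduct.ext' fun a b => by simp
  exact LinearMap.congr_fun h t

/-- `F ∘ mul' = mul' ∘ (F ⊗ F)` for an algebra hom `F`. -/
lemma mul'_map_self_pt {B : Type*} [Semiring B] [Algebra R B] (F : B →ₐ[R] A) (t : B ⊗[R] B) :
    LinearMap.mul' R A (TensorProduct.map F.toLinearMap F.toLinearMap t)
      = F (LinearMap.mul' R B t) := by
  have h : LinearMap.mul' R A ∘ₗ TensorProduct.map F.toLinearMap F.toLinearMap
      = F.toLinearMap ∘ₗ LinearMap.mul' R B :=
    TensorProduct.ext' fun a b => by simp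
  exact LinearMap.congr_fun h t

/-- left counit law for convolution. -/
lemma convA_counit_unit_left (f : H →ₗ[R] A) :
    convA ((Algebra.linearMap R A) ∘ₗ Coalgebra.counit) f = f := by
  apply LinearMap.ext
  intro x
  simp only [convA, LinearMap.comp_apply]
  rw [map_split_l2 (Algebra.linearMap R A) Coalgebra.counit f]
  rw [show (TensorProduct.map (Coalgebra.counit (R := R) (A := H)) LinearMap.id (Coalgebra.comul x)
      : R ⊗[R] H) = LinearMap.rTensor H Coalgebra.counit (Coalgebra.comul x) from rfl]
  rw [Coalgebra.rTensor_counit_comul x]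
  simp

end Conv

section ConvHopf

variable {R H A : Type*} [CommSemiring R] [Semiring H] [HopfAlgebra R H]
  [CommSemiring A] [Algebra R A]

lemma convA_antipode_left (F : H →ₐ[R] A) :
    convA (F.toLinearMap ∘ₗ HopfAlgebra.antipode (R := R) (A := H)) F.toLinearMap
      = (Algebra.linearMap R A) ∘ₗ Coalgebra.counit := by
  apply LinearMap.ext
  intro x
  simp only [convA, LinearMap.comp_apply]
  rw [map_split_l2 F.toLinearMap (HopfAlgebra.antipode (R := R) (A := H)) F.toLinearMap]
  rw [mul'_map_self_pt]
  rw [show (TensorProduct.map (HopfAlgebra.antipode (R := R) (A := H)) LinearMap.id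
        (Coalgebra.comul x) : H ⊗[R] H)
      = LinearMap.rTensor H (HopfAlgebra.antipode (R := R) (A := H)) (Coalgebra.comul x) from rfl]
  rw [HopfAlgebra.mul_antipode_rTensor_comul_apply]
  simp [Algebra.algebraMap_eq_smul_one, map_smul]

end ConvHopf


section Graded

variable {R H : Type*} [Field R] [CommRing H] [HopfAlgebra R H]
variable (𝒜 : ℕ → Submodule R H) [DirectSum.Decomposition 𝒜]

noncomputable def projm (n : ℕ) : H →ₗ[R] H :=
  (𝒜 n).subtype ∘ₗ DirectSum.component R ℕ (fun i => ↥(𝒜 i)) n ∘ₗ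
    (DirectSum.decomposeLinearEquiv 𝒜).toLinearMap

lemma projm_apply (n : ℕ) (h : H) :
    projm 𝒜 n h = (DirectSum.decompose 𝒜 h n : H) := rfl

lemma projm_mem (n : ℕ) (h : H) : projm 𝒜 n h ∈ 𝒜 n := (DirectSum.decompose 𝒜 h n).2

lemma projm_same {n : ℕ} {x : H} (hx : x ∈ 𝒜 n) : projm 𝒜 n x = x := by
  have h1 : DirectSum.decompose 𝒜 x = DirectSum.of (fun i => ↥(𝒜 i)) n ⟨x, hx⟩ :=
    DirectSum.decompose_coe 𝒜 (⟨x, hx⟩ : 𝒜 n)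
  rw [projm_apply, h1, DirectSum.of_eq_same]

lemma projm_ne {m n : ℕ} (hne : n ≠ m) {x : H} (hx : x ∈ 𝒜 n) : projm 𝒜 m x = 0 := by
  have h1 : DirectSum.decompose 𝒜 x = DirectSum.of (fun i => ↥(𝒜 i)) n ⟨x, hx⟩ :=
    DirectSum.decompose_coe 𝒜 (⟨x, hx⟩ : 𝒜 n)
  rw [projm_apply, h1, DirectSum.of_eq_of_ne _ _ _ hne.symm]
  rfl

lemma exists_sum_projm (h : H) : ∃ s : Finset ℕ, h = ∑ i ∈ s, projm 𝒜 i h := by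
  classical
  refine ⟨(DirectSum.decompose 𝒜 h).support, ?_⟩
  conv_lhs => rw [← DirectSum.sum_support_decompose 𝒜 h]
  exact Finset.sum_congr rfl fun i _ => (projm_apply 𝒜 i h).symm

variable {𝒜}

lemma one_ne_zero'' (R : Type*) [CommSemiring R] [Nontrivial R] {H : Type*} [Semiring H]
    [Bialgebra R H] : (1 : H) ≠ 0 := by
  intro h
  have h1 : Coalgebra.counit (R := R) (1 : H) = 1 := Bialgebra.counit_one
  rw [h, map_zero] at h1
  exact one_ne_zero h1.symm

lemma smul_one_eq_zero {c : R} (hc : c • (1 : H) = 0) : c = 0 := by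
  by_contra h
  have h2 : c⁻¹ • (c • (1 : H)) = 0 := by rw [hc, smul_zero]
  rw [smul_smul, inv_mul_cancel₀ h, one_smul] at h2
  exact one_ne_zero'' R h2

lemma mem_A0_eq (hconn : 𝒜 0 = Submodule.span R {(1 : H)}) {x : H} (hx : x ∈ 𝒜 0) :
    x = (Coalgebra.counit (R := R) x) • (1 : H) := by
  rw [hconn] at hx
  obtain ⟨c, rfl⟩ := Submodule.mem_span_singleton.1 hx
  rw [map_smul, Bialgebra.counit_one, smul_eq_mul, mul_one]


/-- Applying `ε ⊗ id` (then `lid`) to a sum-of-tensors representation of `Δx` recovers `x`. -/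
lemma counit_left_identity {x : H} {m : ℕ} {f g : Fin m → H}
    (h : Coalgebra.comul (R := R) x = ∑ i, f i ⊗ₜ[R] g i) :
    x = ∑ i, (Coalgebra.counit (R := R) (f i)) • g i := by
  have h1 := congrArg (fun z => (TensorProduct.lid R H)
    (LinearMap.rTensor H (Coalgebra.counit (R := R)) z)) h
  simp only [Coalgebra.rTensor_counit_comul, TensorProduct.lid_tmul, one_smul] at h1
  rw [map_sum, map_sum] at h1
  simpa [LinearMap.rTensor_tmul, TensorProduct.lid_tmul] using h1

lemma counit_right_identity {x : H} {m : ℕ} {f g : Fin m → H}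
    (h : Coalgebra.comul (R := R) x = ∑ i, f i ⊗ₜ[R] g i) :
    x = ∑ i, (Coalgebra.counit (R := R) (g i)) • f i := by
  have h1 := congrArg (fun z => (TensorProduct.rid R H)
    (LinearMap.lTensor H (Coalgebra.counit (R := R)) z)) h
  simp only [Coalgebra.lTensor_counit_comul, TensorProduct.rid_tmul, one_smul] at h1
  rw [map_sum, map_sum] at h1
  simpa [LinearMap.lTensor_tmul, TensorProduct.rid_tmul] using h1

variable (𝒜)

lemma exists_graded_repr
    (hcomul : ∀ n : ℕ, ∀ h ∈ 𝒜 n,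
      Coalgebra.comul (R := R) h ∈
        ⨆ (p : ℕ × ℕ) (_ : p.1 + p.2 = n), tensorSub (𝒜 p.1) (𝒜 p.2))
    {n : ℕ} {x : H} (hx : x ∈ 𝒜 n) :
    ∃ (m : ℕ) (f g : Fin m → H) (d e : Fin m → ℕ),
      (∀ i, f i ∈ 𝒜 (d i) ∧ g i ∈ 𝒜 (e i) ∧ d i + e i = n) ∧
      Coalgebra.comul (R := R) x = ∑ i, f i ⊗ₜ[R] g i := by
  classical
  let P : H ⊗[R] H → Prop := fun z =>
    ∃ (m : ℕ) (f g : Fin m → H) (d e : Fin m → ℕ),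
      (∀ i, f i ∈ 𝒜 (d i) ∧ g i ∈ 𝒜 (e i) ∧ d i + e i = n) ∧ z = ∑ i, f i ⊗ₜ[R] g i
  let Q : Submodule R (H ⊗[R] H) :=
    { carrier := setOf P
      add_mem' := by
        rintro a b ⟨m₁, f₁, g₁, d₁, e₁, h₁, rfl⟩ ⟨m₂, f₂, g₂, d₂, e₂, h₂, rfl⟩
        refine ⟨m₁ + m₂, Fin.append f₁ f₂, Fin.append g₁ g₂, Fin.append d₁ d₂,
          Fin.append e₁ e₂, ?_, ?_⟩
        · intro i
          refine Fin.addCases (fun j => ?_) (fun j => ?_) i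
          · simpa only [Fin.append_left] using h₁ j
          · simpa only [Fin.append_right] using h₂ j
        · rw [Fin.sum_univ_add]
          congr 1
          · exact Finset.sum_congr rfl fun j _ => by simp [Fin.append_left]
          · exact Finset.sum_congr rfl fun j _ => by simp [Fin.append_right]
      zero_mem' := ⟨0, Fin.elim0, Fin.elim0, Fin.elim0, Fin.elim0, fun i => i.elim0, by simp⟩
      smul_mem' := by
        rintro c a ⟨m, f, g, d, e, hfg, rfl⟩
        refine ⟨m, fun i => c • f i, g, d, e,
          fun i => ⟨Submodule.smul_mem _ _ (hfg i).1, (hfg i).2.1, (hfg i).2.2⟩, ?_⟩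
        rw [Finset.smul_sum]
        exact Finset.sum_congr rfl fun i _ => by rw [TensorProduct.smul_tmul'] }
  have hle : (⨆ (p : ℕ × ℕ) (_ : p.1 + p.2 = n), tensorSub (𝒜 p.1) (𝒜 p.2)) ≤ Q := by
    refine iSup_le fun p => iSup_le fun hp => ?_
    rw [tensorSub, Submodule.span_le]
    rintro z ⟨a, ha, b, hb, rfl⟩
    exact ⟨1, fun _ => a, fun _ => b, fun _ => p.1, fun _ => p.2,
      fun _ => ⟨ha, hb, hp⟩, by simp⟩
  exact hle (hcomul n x hx)

lemma comul_structure
    (hconn : 𝒜 0 = Submodule.span R {(1 : H)})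
    (hcomul : ∀ n : ℕ, ∀ h ∈ 𝒜 n,
      Coalgebra.comul (R := R) h ∈
        ⨆ (p : ℕ × ℕ) (_ : p.1 + p.2 = n), tensorSub (𝒜 p.1) (𝒜 p.2))
    {n : ℕ} (hn : 0 < n) {x : H} (hx : x ∈ 𝒜 n) :
    Coalgebra.counit (R := R) x = 0 ∧
    ∃ (m : ℕ) (f g : Fin m → H) (d e : Fin m → ℕ) (s : Finset (Fin m)),
      (∀ i ∈ s, f i ∈ 𝒜 (d i) ∧ g i ∈ 𝒜 (e i) ∧ d i + e i = n ∧ 0 < d i ∧ 0 < e i) ∧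
      Coalgebra.comul (R := R) x
        = x ⊗ₜ[R] (1 : H) + (1 : H) ⊗ₜ[R] x + ∑ i ∈ s, f i ⊗ₜ[R] g i := by
  classical
  obtain ⟨m, f, g, d, e, hfg, hrepr⟩ := exists_graded_repr 𝒜 hcomul hx
  have idL : x = ∑ i, (Coalgebra.counit (R := R) (f i)) • g i := counit_left_identity hrepr
  have idR : x = ∑ i, (Coalgebra.counit (R := R) (g i)) • f i := counit_right_identity hrepr
  have hprojR : ∀ k : ℕ, projm 𝒜 k x
      = ∑ i, if d i = k then (Coalgebra.counit (R := R) (g i)) • f i else 0 := by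
    intro k
    conv_lhs => rw [idR]
    rw [map_sum]
    refine Finset.sum_congr rfl fun i _ => ?_
    by_cases hdi : d i = k
    · rw [if_pos hdi]
      exact projm_same 𝒜 (hdi ▸ Submodule.smul_mem _ _ (hfg i).1)
    · rw [if_neg hdi]
      exact projm_ne 𝒜 hdi (Submodule.smul_mem _ _ (hfg i).1)
  have hprojL : ∀ k : ℕ, projm 𝒜 k x
      = ∑ i, if e i = k then (Coalgebra.counit (R := R) (f i)) • g i else 0 := by
    intro k
    conv_lhs => rw [idL]
    rw [map_sum]
    refine Finset.sum_congr rfl fun i _ => ?_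
    by_cases hei : e i = k
    · rw [if_pos hei]
      exact projm_same 𝒜 (hei ▸ Submodule.smul_mem _ _ (hfg i).2.1)
    · rw [if_neg hei]
      exact projm_ne 𝒜 hei (Submodule.smul_mem _ _ (hfg i).2.1)
  have hXn : ∑ i, (if d i = n then (Coalgebra.counit (R := R) (g i)) • f i else 0) = x := by
    rw [← hprojR n, projm_same 𝒜 hx]
  have hYn : ∑ i, (if e i = n then (Coalgebra.counit (R := R) (f i)) • g i else 0) = x := by
    rw [← hprojL n, projm_same 𝒜 hx]
  have hT0 : ∑ i, (if d i = 0 then (Coalgebra.counit (R := R) (g i)) • f i else 0) = 0 := by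
    rw [← hprojR 0, projm_ne 𝒜 (Nat.pos_iff_ne_zero.mp hn) hx]
  -- counit vanishes
  have hcx : Coalgebra.counit (R := R) x = 0 := by
    have h1 : Coalgebra.counit (R := R) x
        = ∑ i, if d i = 0 then
            (Coalgebra.counit (R := R) (f i)) * (Coalgebra.counit (R := R) (g i)) else 0 := by
      conv_lhs => rw [← hYn]
      rw [map_sum]
      refine Finset.sum_congr rfl fun i _ => ?_
      have hde := (hfg i).2.2
      by_cases h2 : d i = 0
      · have h3 : e i = n := by omega
        rw [if_pos h3, if_pos h2, map_smul, smul_eq_mul]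
      · have h3 : ¬ e i = n := by omega
        rw [if_neg h3, if_neg h2, map_zero]
    have h2 : (∑ i, if d i = 0 then
            (Coalgebra.counit (R := R) (g i)) * (Coalgebra.counit (R := R) (f i)) else 0)
        = 0 := by
      have hthis := congrArg (Coalgebra.counit (R := R)) hT0
      rw [map_sum, map_zero] at hthis
      refine Eq.trans (Finset.sum_congr rfl fun i _ => ?_) hthis
      by_cases h2 : d i = 0
      · rw [if_pos h2, if_pos h2, map_smul, smul_eq_mul]
      · rw [if_neg h2, if_neg h2, map_zero]
    rw [h1]
    refine Eq.trans (Finset.sum_congr rfl fun i _ => ?_) h2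
    by_cases hdi : d i = 0
    · rw [if_pos hdi, if_pos hdi, mul_comm]
    · rw [if_neg hdi, if_neg hdi]
  refine ⟨hcx, m, f, g, d, e,
    Finset.univ.filter (fun i => d i ≠ 0 ∧ e i ≠ 0), fun i hi => ?_, ?_⟩
  · simp only [Finset.mem_filter] at hi
    exact ⟨(hfg i).1, (hfg i).2.1, (hfg i).2.2, Nat.pos_iff_ne_zero.mpr hi.2.1,
      Nat.pos_iff_ne_zero.mpr hi.2.2⟩
  -- the decomposition
  have split : ∀ i : Fin m, f i ⊗ₜ[R] g i
      = (if e i = 0 then f i ⊗ₜ[R] g i else 0) + (if d i = 0 then f i ⊗ₜ[R] g i else 0)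
        + (if d i ≠ 0 ∧ e i ≠ 0 then f i ⊗ₜ[R] g i else 0) := by
    intro i
    have hde := (hfg i).2.2
    by_cases h1 : e i = 0 <;> by_cases h2 : d i = 0
    · exact absurd hde (by omega)
    · simp [h1, h2]
    · simp [h1, h2]
    · simp [h1, h2]
  have hA : ∑ i, (if e i = 0 then f i ⊗ₜ[R] g i else 0) = x ⊗ₜ[R] (1 : H) := by
    have h1 : ∀ i : Fin m, (if e i = 0 then f i ⊗ₜ[R] g i else 0)
        = (if d i = n then (Coalgebra.counit (R := R) (g i)) • f i else 0) ⊗ₜ[R] (1 : H) := by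
      intro i
      have hde := (hfg i).2.2
      by_cases h2 : d i = n
      · have h3 : e i = 0 := by omega
        rw [if_pos h3, if_pos h2]
        have hg0 : g i ∈ 𝒜 0 := h3 ▸ (hfg i).2.1
        conv_lhs => rw [mem_A0_eq hconn hg0]
        rw [TensorProduct.tmul_smul, TensorProduct.smul_tmul']
      · have h3 : ¬ e i = 0 := by omega
        rw [if_neg h3, if_neg h2, TensorProduct.zero_tmul]
    rw [Finset.sum_congr rfl fun i _ => h1 i, ← TensorProduct.sum_tmul, hXn]
  have hB : ∑ i, (if d i = 0 then f i ⊗ₜ[R] g i else 0) = (1 : H) ⊗ₜ[R] x := by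
    have h1 : ∀ i : Fin m, (if d i = 0 then f i ⊗ₜ[R] g i else 0)
        = (1 : H) ⊗ₜ[R] (if e i = n then (Coalgebra.counit (R := R) (f i)) • g i else 0) := by
      intro i
      have hde := (hfg i).2.2
      by_cases h2 : e i = n
      · have h3 : d i = 0 := by omega
        rw [if_pos h3, if_pos h2]
        have hf0 : f i ∈ 𝒜 0 := h3 ▸ (hfg i).1
        conv_lhs => rw [mem_A0_eq hconn hf0]
        rw [TensorProduct.smul_tmul]
      · have h3 : ¬ d i = 0 := by omega
        rw [if_neg h3, if_neg h2, TensorProduct.tmul_zero]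
    rw [Finset.sum_congr rfl fun i _ => h1 i, ← TensorProduct.tmul_sum, hYn]
  have hC : ∑ i, (if d i ≠ 0 ∧ e i ≠ 0 then f i ⊗ₜ[R] g i else 0)
      = ∑ i ∈ Finset.univ.filter (fun i => d i ≠ 0 ∧ e i ≠ 0), f i ⊗ₜ[R] g i :=
    (Finset.sum_filter _ _).symm
  calc Coalgebra.comul (R := R) x = ∑ i, f i ⊗ₜ[R] g i := hrepr
    _ = ∑ i, ((if e i = 0 then f i ⊗ₜ[R] g i else 0) + (if d i = 0 then f i ⊗ₜ[R] g i else 0)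
        + (if d i ≠ 0 ∧ e i ≠ 0 then f i ⊗ₜ[R] g i else 0)) :=
      Finset.sum_congr rfl fun i _ => split i
    _ = x ⊗ₜ[R] (1 : H) + (1 : H) ⊗ₜ[R] x
        + ∑ i ∈ Finset.univ.filter (fun i => d i ≠ 0 ∧ e i ≠ 0), f i ⊗ₜ[R] g i := by
      rw [Finset.sum_add_distrib, Finset.sum_add_distrib, hA, hB, hC]

end Graded

section Recursion

variable {R H A : Type*} [Field R] [CommRing H] [HopfAlgebra R H]
  [CommRing A] [Algebra R A]
variable (𝒜 : ℕ → Submodule R H) [DirectSum.Decomposition 𝒜]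
variable (T : A →ₗ[R] A) (φ : H →ₐ[R] A)

noncomputable def Psi : ℕ → (H →ₗ[R] A)
  | 0 => Algebra.linearMap R A ∘ₗ Coalgebra.counit ∘ₗ projm 𝒜 0
  | n + 1 => Psi n +
      ((-T) ∘ₗ LinearMap.mul' R A ∘ₗ TensorProduct.map (Psi n) φ.toLinearMap ∘ₗ
        Coalgebra.comul) ∘ₗ projm 𝒜 (n + 1)

lemma Psi_zero_of_gt {k : ℕ} : ∀ {n : ℕ}, n < k → ∀ {x : H}, x ∈ 𝒜 k → Psi 𝒜 T φ n x = 0 := by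
  intro n
  induction n with
  | zero =>
    intro hk x hx
    simp only [Psi, LinearMap.comp_apply]
    rw [projm_ne 𝒜 (by omega) hx, map_zero, map_zero]
  | succ n ih =>
    intro hk x hx
    simp only [Psi, LinearMap.add_apply, LinearMap.comp_apply]
    rw [ih (by omega) hx, projm_ne 𝒜 (by omega) hx]
    simp

lemma Psi_one (h1 : (1 : H) ∈ 𝒜 0) (n : ℕ) : Psi 𝒜 T φ n (1 : H) = 1 := by
  induction n with
  | zero =>
    simp only [Psi, LinearMap.comp_apply]
    rw [projm_same 𝒜 h1, Bialgebra.counit_one]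
    simp
  | succ n ih =>
    simp only [Psi, LinearMap.add_apply, LinearMap.comp_apply]
    rw [projm_ne 𝒜 (by omega) h1, ih]
    simp

lemma Psi_stable {k : ℕ} {x : H} (hx : x ∈ 𝒜 k) :
    ∀ {n : ℕ}, k ≤ n → Psi 𝒜 T φ n x = Psi 𝒜 T φ k x := by
  intro n hn
  induction n, hn using Nat.le_induction with
  | base => rfl
  | succ n hkn ih =>
    simp only [Psi, LinearMap.add_apply, LinearMap.comp_apply]
    rw [projm_ne 𝒜 (by omega) hx, ih]
    simp

noncomputable def phinegL : H →ₗ[R] A :=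
  DirectSum.toModule R ℕ A (fun n => Psi 𝒜 T φ n ∘ₗ (𝒜 n).subtype) ∘ₗ
    (DirectSum.decomposeLinearEquiv 𝒜).toLinearMap

lemma phinegL_of {k : ℕ} {x : H} (hx : x ∈ 𝒜 k) :
    phinegL 𝒜 T φ x = Psi 𝒜 T φ k x := by
  simp only [phinegL, LinearMap.comp_apply, LinearEquiv.coe_coe,
    DirectSum.decomposeLinearEquiv_apply]
  rw [show DirectSum.decompose 𝒜 x = DirectSum.of (fun i => ↥(𝒜 i)) k ⟨x, hx⟩ from
    DirectSum.decompose_coe 𝒜 (⟨x, hx⟩ : 𝒜 k), ← DirectSum.lof_eq_of R,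
    DirectSum.toModule_lof]
  rfl

lemma phinegL_eq_Psi {k n : ℕ} {x : H} (hx : x ∈ 𝒜 k) (hkn : k ≤ n) :
    phinegL 𝒜 T φ x = Psi 𝒜 T φ n x :=
  (phinegL_of 𝒜 T φ hx).trans (Psi_stable 𝒜 T φ hx hkn).symm

lemma phinegL_one (h1 : (1 : H) ∈ 𝒜 0) : phinegL 𝒜 T φ 1 = 1 :=
  (phinegL_of 𝒜 T φ h1).trans (Psi_one 𝒜 T φ h1 0)

lemma phinegL_rec {n : ℕ} {x : H} (hx : x ∈ 𝒜 (n + 1)) :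
    phinegL 𝒜 T φ x = - T (LinearMap.mul' R A
      (TensorProduct.map (Psi 𝒜 T φ n) φ.toLinearMap (Coalgebra.comul x))) := by
  rw [phinegL_of 𝒜 T φ hx]
  show Psi 𝒜 T φ (n + 1) x = _
  simp only [Psi, LinearMap.add_apply, LinearMap.comp_apply, LinearMap.neg_apply]
  rw [projm_same 𝒜 hx, Psi_zero_of_gt 𝒜 T φ (Nat.lt_succ_self n) hx, zero_add]

/-- The main package: recursion formula and the convolution formula for homogeneous
elements of positive degree. -/
lemma phinegL_package (h1 : (1 : H) ∈ 𝒜 0)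
    {n : ℕ} (hn : 0 < n) {x : H} (hx : x ∈ 𝒜 n)
    {m : ℕ} {f g : Fin m → H} {d e : Fin m → ℕ} {s : Finset (Fin m)}
    (hprops : ∀ i ∈ s, f i ∈ 𝒜 (d i) ∧ g i ∈ 𝒜 (e i) ∧ d i + e i = n ∧ 0 < d i ∧ 0 < e i)
    (hdec : Coalgebra.comul (R := R) x
      = x ⊗ₜ[R] (1 : H) + (1 : H) ⊗ₜ[R] x + ∑ i ∈ s, f i ⊗ₜ[R] g i) :
    phinegL 𝒜 T φ x
        = - T (φ x + ∑ i ∈ s, phinegL 𝒜 T φ (f i) * φ (g i)) ∧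
      convA (phinegL 𝒜 T φ) φ.toLinearMap x
        = phinegL 𝒜 T φ x + (φ x + ∑ i ∈ s, phinegL 𝒜 T φ (f i) * φ (g i)) := by
  obtain ⟨n', rfl⟩ : ∃ n', n = n' + 1 := by
    rcases n with _ | n'
    · exact absurd hn (by omega)
    · exact ⟨n', rfl⟩
  have hterm : ∀ i ∈ s, Psi 𝒜 T φ n' (f i) * φ.toLinearMap (g i)
      = phinegL 𝒜 T φ (f i) * φ (g i) := by
    intro i hi
    obtain ⟨hfi, _, hde, _, hei⟩ := hprops i hi
    rw [← phinegL_eq_Psi 𝒜 T φ hfi (by omega)]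
    rfl
  have hinner : LinearMap.mul' R A
      (TensorProduct.map (Psi 𝒜 T φ n') φ.toLinearMap (Coalgebra.comul x))
      = φ x + ∑ i ∈ s, phinegL 𝒜 T φ (f i) * φ (g i) := by
    rw [hdec]
    simp only [map_add, map_sum, TensorProduct.map_tmul, LinearMap.mul'_apply]
    rw [Psi_zero_of_gt 𝒜 T φ (Nat.lt_succ_self n') hx, Psi_one 𝒜 T φ h1,
      Finset.sum_congr rfl hterm]
    simp only [AlgHom.toLinearMap_apply, map_one, zero_mul, one_mul, zero_add]
  have hinner2 : LinearMap.mul' R A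
      (TensorProduct.map (phinegL 𝒜 T φ) φ.toLinearMap (Coalgebra.comul x))
      = phinegL 𝒜 T φ x + (φ x + ∑ i ∈ s, phinegL 𝒜 T φ (f i) * φ (g i)) := by
    rw [hdec]
    simp only [map_add, map_sum, TensorProduct.map_tmul, LinearMap.mul'_apply]
    rw [phinegL_one 𝒜 T φ h1]
    simp only [AlgHom.toLinearMap_apply, map_one, mul_one, one_mul, add_assoc]
  exact ⟨by rw [phinegL_rec 𝒜 T φ hx, hinner],
    by rw [convA, LinearMap.comp_apply, LinearMap.comp_apply, hinner2]⟩

end Recursion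

section TSplit

variable {R A : Type*} [Field R] [CommRing A] [Algebra R A]
variable {Aneg Apos : Submodule R A} {T : A →ₗ[R] A}

lemma T_mem_neg (hcompl : IsCompl Aneg Apos) (hTneg : ∀ a ∈ Aneg, T a = a)
    (hTpos : ∀ a ∈ Apos, T a = 0) (a : A) : T a ∈ Aneg := by
  obtain ⟨u, v, huv, -⟩ := Submodule.existsUnique_add_of_isCompl hcompl a
  rw [← huv, map_add, hTneg u u.2, hTpos v v.2, add_zero]
  exact u.2

lemma sub_T_mem_pos (hcompl : IsCompl Aneg Apos) (hTneg : ∀ a ∈ Aneg, T a = a)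
    (hTpos : ∀ a ∈ Apos, T a = 0) (a : A) : a - T a ∈ Apos := by
  obtain ⟨u, v, huv, -⟩ := Submodule.existsUnique_add_of_isCompl hcompl a
  rw [← huv, map_add, hTneg u u.2, hTpos v v.2, add_zero, add_sub_cancel_left]
  exact v.2

lemma rota_baxter (hcompl : IsCompl Aneg Apos)
    (hnegmul : ∀ a ∈ Aneg, ∀ b ∈ Aneg, a * b ∈ Aneg)
    (hposmul : ∀ a ∈ Apos, ∀ b ∈ Apos, a * b ∈ Apos)
    (hTneg : ∀ a ∈ Aneg, T a = a) (hTpos : ∀ a ∈ Apos, T a = 0) (x y : A) :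
    T x * T y = T (T x * y + x * T y - x * y) := by
  have key : T x * y + x * T y - x * y = T x * T y - (x - T x) * (y - T y) := by ring
  rw [key, map_sub,
    hTneg _ (hnegmul _ (T_mem_neg hcompl hTneg hTpos x) _ (T_mem_neg hcompl hTneg hTpos y)),
    hTpos _ (hposmul _ (sub_T_mem_pos hcompl hTneg hTpos x) _
      (sub_T_mem_pos hcompl hTneg hTpos y)), sub_zero]

end TSplit

section Mult

variable {R H A : Type*} [Field R] [CommRing H] [HopfAlgebra R H]
  [CommRing A] [Algebra R A]
variable (𝒜 : ℕ → Submodule R H) [DirectSum.Decomposition 𝒜]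
variable {Aneg Apos : Submodule R A}
variable (T : A →ₗ[R] A) (φ : H →ₐ[R] A)

lemma phinegL_mul_homog
    (hconn : 𝒜 0 = Submodule.span R {(1 : H)})
    (hmul : ∀ (p q : ℕ), ∀ a ∈ 𝒜 p, ∀ b ∈ 𝒜 q, a * b ∈ 𝒜 (p + q))
    (hcomul : ∀ n : ℕ, ∀ h ∈ 𝒜 n,
      Coalgebra.comul (R := R) h ∈
        ⨆ (p : ℕ × ℕ) (_ : p.1 + p.2 = n), tensorSub (𝒜 p.1) (𝒜 p.2))
    (hcompl : IsCompl Aneg Apos)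
    (hnegmul : ∀ a ∈ Aneg, ∀ b ∈ Aneg, a * b ∈ Aneg)
    (hposmul : ∀ a ∈ Apos, ∀ b ∈ Apos, a * b ∈ Apos)
    (hTneg : ∀ a ∈ Aneg, T a = a) (hTpos : ∀ a ∈ Apos, T a = 0) :
    ∀ N p q : ℕ, p + q = N → ∀ a ∈ 𝒜 p, ∀ b ∈ 𝒜 q,
      phinegL 𝒜 T φ (a * b) = phinegL 𝒜 T φ a * phinegL 𝒜 T φ b := by
  have h1 : (1 : H) ∈ 𝒜 0 := by rw [hconn]; exact Submodule.mem_span_singleton_self 1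
  intro N
  induction N using Nat.strong_induction_on with
  | _ N IH =>
  intro p q hpq a ha b hb
  rcases Nat.eq_zero_or_pos p with hp0 | hp
  · subst hp0
    have ha' := mem_A0_eq hconn ha
    rw [ha', smul_mul_assoc, one_mul, map_smul, map_smul, smul_mul_assoc,
      phinegL_one 𝒜 T φ h1, one_mul]
  rcases Nat.eq_zero_or_pos q with hq0 | hq
  · subst hq0
    have hb' := mem_A0_eq hconn hb
    rw [hb', mul_smul_comm, mul_one, map_smul, map_smul, mul_smul_comm,
      phinegL_one 𝒜 T φ h1, mul_one]
  -- both degrees positive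
  subst hpq
  obtain ⟨n', hN⟩ : ∃ n', p + q = n' + 1 := ⟨p + q - 1, by omega⟩
  obtain ⟨-, ma, fa, ga, da, ea, sa, hpa, hda⟩ := comul_structure 𝒜 hconn hcomul hp ha
  obtain ⟨-, mb, fb, gb, db, eb, sb, hpb, hdb⟩ := comul_structure 𝒜 hconn hcomul hq hb
  obtain ⟨hra, -⟩ := phinegL_package 𝒜 T φ h1 hp ha hpa hda
  obtain ⟨hrb, -⟩ := phinegL_package 𝒜 T φ h1 hq hb hpb hdb
  have hab : a * b ∈ 𝒜 (n' + 1) := hN ▸ hmul p q a ha b hb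
  set pn := phinegL 𝒜 T φ with hpn
  set Sa' := ∑ i ∈ sa, pn (fa i) * φ (ga i) with hSa'
  set Sb' := ∑ j ∈ sb, pn (fb j) * φ (gb j) with hSb'
  -- expansion of the coproduct of a * b
  have hexp : Coalgebra.comul (R := R) (a * b)
      = (a * b) ⊗ₜ[R] (1 : H) + a ⊗ₜ[R] b + (∑ j ∈ sb, (a * fb j) ⊗ₜ[R] gb j)
        + (b ⊗ₜ[R] a + (1 : H) ⊗ₜ[R] (a * b) + (∑ j ∈ sb, fb j ⊗ₜ[R] (a * gb j)))
        + ((∑ i ∈ sa, (fa i * b) ⊗ₜ[R] ga i) + (∑ i ∈ sa, fa i ⊗ₜ[R] (ga i * b))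
          + ∑ i ∈ sa, ∑ j ∈ sb, (fa i * fb j) ⊗ₜ[R] (ga i * gb j)) := by
    rw [Bialgebra.comul_mul, hda, hdb]
    simp only [add_mul, mul_add, Finset.sum_mul, Finset.mul_sum,
      Algebra.TensorProduct.tmul_mul_tmul, mul_one, one_mul]
    rw [Finset.sum_add_distrib, Finset.sum_add_distrib,
      Finset.sum_comm (s := sb) (t := sa)]
    abel
  -- evaluate X := m ((Psi n' ⊗ φ) (comul (a b)))
  have hX : LinearMap.mul' R A
      (TensorProduct.map (Psi 𝒜 T φ n') φ.toLinearMap (Coalgebra.comul (a * b)))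
      = pn a * (φ b + Sb') + (φ a + Sa') * pn b + (φ a + Sa') * (φ b + Sb') := by
    rw [hexp]
    simp only [map_add, map_sum, TensorProduct.map_tmul, LinearMap.mul'_apply,
      AlgHom.toLinearMap_apply]
    rw [Psi_zero_of_gt 𝒜 T φ (by omega) hab, Psi_one 𝒜 T φ h1]
    rw [show Psi 𝒜 T φ n' a = pn a from (phinegL_eq_Psi 𝒜 T φ ha (by omega)).symm]
    rw [show Psi 𝒜 T φ n' b = pn b from (phinegL_eq_Psi 𝒜 T φ hb (by omega)).symm]
    -- rewrite sums
    have hs1 : ∀ j ∈ sb, Psi 𝒜 T φ n' (a * fb j) * φ (gb j)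
        = pn a * (pn (fb j) * φ (gb j)) := by
      intro j hj
      obtain ⟨hfj, -, hdej, hdj, hej⟩ := hpb j hj
      have hmem : a * fb j ∈ 𝒜 (p + db j) := hmul _ _ _ ha _ hfj
      rw [show Psi 𝒜 T φ n' (a * fb j) = pn (a * fb j) from
        (phinegL_eq_Psi 𝒜 T φ hmem (by omega)).symm,
        IH (p + db j) (by omega) p (db j) rfl a ha _ hfj, mul_assoc]
    have hs2 : ∀ j ∈ sb, Psi 𝒜 T φ n' (fb j) * φ (a * gb j)
        = φ a * (pn (fb j) * φ (gb j)) := by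
      intro j hj
      obtain ⟨hfj, -, hdej, hdj, hej⟩ := hpb j hj
      rw [show Psi 𝒜 T φ n' (fb j) = pn (fb j) from
        (phinegL_eq_Psi 𝒜 T φ hfj (by omega)).symm, map_mul]
      ring
    have hs3 : ∀ i ∈ sa, Psi 𝒜 T φ n' (fa i * b) * φ (ga i)
        = pn b * (pn (fa i) * φ (ga i)) := by
      intro i hi
      obtain ⟨hfi, -, hdei, hdi, hei⟩ := hpa i hi
      have hmem : fa i * b ∈ 𝒜 (da i + q) := hmul _ _ _ hfi _ hb
      rw [show Psi 𝒜 T φ n' (fa i * b) = pn (fa i * b) from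
        (phinegL_eq_Psi 𝒜 T φ hmem (by omega)).symm,
        IH (da i + q) (by omega) (da i) q rfl _ hfi b hb]
      ring
    have hs4 : ∀ i ∈ sa, Psi 𝒜 T φ n' (fa i) * φ (ga i * b)
        = (pn (fa i) * φ (ga i)) * φ b := by
      intro i hi
      obtain ⟨hfi, -, hdei, hdi, hei⟩ := hpa i hi
      rw [show Psi 𝒜 T φ n' (fa i) = pn (fa i) from
        (phinegL_eq_Psi 𝒜 T φ hfi (by omega)).symm, map_mul]
      ring
    have hs5 : ∀ i ∈ sa, ∀ j ∈ sb, Psi 𝒜 T φ n' (fa i * fb j) * φ (ga i * gb j)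
        = (pn (fa i) * φ (ga i)) * (pn (fb j) * φ (gb j)) := by
      intro i hi j hj
      obtain ⟨hfi, -, hdei, hdi, hei⟩ := hpa i hi
      obtain ⟨hfj, -, hdej, hdj, hej⟩ := hpb j hj
      have hmem : fa i * fb j ∈ 𝒜 (da i + db j) := hmul _ _ _ hfi _ hfj
      rw [show Psi 𝒜 T φ n' (fa i * fb j) = pn (fa i * fb j) from
        (phinegL_eq_Psi 𝒜 T φ hmem (by omega)).symm,
        IH (da i + db j) (by omega) (da i) (db j) rfl _ hfi _ hfj, map_mul]
      ring
    rw [Finset.sum_congr rfl hs1, Finset.sum_congr rfl hs2, Finset.sum_congr rfl hs3,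
      Finset.sum_congr rfl hs4,
      Finset.sum_congr rfl (fun i hi => Finset.sum_congr rfl (hs5 i hi))]
    have f1 : ∑ j ∈ sb, pn a * (pn (fb j) * φ (gb j)) = pn a * Sb' := by
      rw [hSb', Finset.mul_sum]
    have f2 : ∑ j ∈ sb, φ a * (pn (fb j) * φ (gb j)) = φ a * Sb' := by
      rw [hSb', Finset.mul_sum]
    have f3 : ∑ i ∈ sa, pn b * (pn (fa i) * φ (ga i)) = pn b * Sa' := by
      rw [hSa', Finset.mul_sum]
    have f4 : ∑ i ∈ sa, pn (fa i) * φ (ga i) * φ b = Sa' * φ b := by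
      rw [hSa', Finset.sum_mul]
    have f5 : ∑ i ∈ sa, ∑ j ∈ sb, pn (fa i) * φ (ga i) * (pn (fb j) * φ (gb j))
        = Sa' * Sb' := by
      rw [hSa', hSb', Finset.sum_mul_sum]
    rw [map_mul φ a b, f1, f2, f3, f4, f5]
    ring
  -- now conclude using the recursion and the Rota-Baxter identity
  have hrec : pn (a * b) = - T (pn a * (φ b + Sb') + (φ a + Sa') * pn b
      + (φ a + Sa') * (φ b + Sb')) := by
    rw [hpn, phinegL_rec 𝒜 T φ hab, hX]
  have hTa : T (φ a + Sa') = - pn a := by rw [hra, neg_neg]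
  have hTb : T (φ b + Sb') = - pn b := by rw [hrb, neg_neg]
  calc pn (a * b)
      = - T (pn a * (φ b + Sb') + (φ a + Sa') * pn b + (φ a + Sa') * (φ b + Sb')) := hrec
    _ = T (-(pn a * (φ b + Sb') + (φ a + Sa') * pn b + (φ a + Sa') * (φ b + Sb'))) := by
        rw [map_neg]
    _ = T (T (φ a + Sa') * (φ b + Sb') + (φ a + Sa') * T (φ b + Sb')
        - (φ a + Sa') * (φ b + Sb')) := by
        rw [hTa, hTb]
        congr 1
        ring
    _ = T (φ a + Sa') * T (φ b + Sb') :=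
        (rota_baxter hcompl hnegmul hposmul hTneg hTpos _ _).symm
    _ = pn a * pn b := by rw [hTa, hTb]; ring

end Mult

section Final

variable {R H A : Type*} [Field R] [CommRing H] [HopfAlgebra R H]
  [CommRing A] [Algebra R A]
variable (𝒜 : ℕ → Submodule R H) [DirectSum.Decomposition 𝒜]
variable {Aneg Apos : Submodule R A}
variable (T : A →ₗ[R] A) (φ : H →ₐ[R] A)

lemma exists_sum_projm' (h : H) :
    ∃ s : Finset ℕ, (h = ∑ i ∈ s, projm 𝒜 i h) ∧ ∀ i ∉ s, projm 𝒜 i h = 0 := by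
  classical
  refine ⟨(DirectSum.decompose 𝒜 h).support, ?_, ?_⟩
  · conv_lhs => rw [← DirectSum.sum_support_decompose 𝒜 h]
    exact Finset.sum_congr rfl fun i _ => (projm_apply 𝒜 i h).symm
  · intro i hi
    rw [projm_apply]
    rw [DFinsupp.notMem_support_iff.1 hi]
    rfl

lemma projm0_eq_zero_of_counit
    (hconn : 𝒜 0 = Submodule.span R {(1 : H)})
    (hcomul : ∀ n : ℕ, ∀ h ∈ 𝒜 n,
      Coalgebra.comul (R := R) h ∈
        ⨆ (p : ℕ × ℕ) (_ : p.1 + p.2 = n), tensorSub (𝒜 p.1) (𝒜 p.2))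
    {h : H} (hc : Coalgebra.counit (R := R) h = 0) : projm 𝒜 0 h = 0 := by
  classical
  obtain ⟨s, hs, hs0⟩ := exists_sum_projm' 𝒜 h
  have hz : Coalgebra.counit (R := R) (projm 𝒜 0 h) = 0 := by
    have h2 := congrArg (Coalgebra.counit (R := R)) hs
    rw [hc, map_sum] at h2
    have h3 : ∀ i ∈ s, Coalgebra.counit (R := R) (projm 𝒜 i h)
        = if i = 0 then Coalgebra.counit (R := R) (projm 𝒜 0 h) else 0 := by
      intro i _
      rcases i with _ | k
      · rw [if_pos rfl]
      · rw [if_neg (by omega)]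
        exact (comul_structure 𝒜 hconn hcomul (Nat.succ_pos k) (projm_mem 𝒜 (k+1) h)).1
    rw [Finset.sum_congr rfl h3, Finset.sum_ite_eq' s 0] at h2
    by_cases h0 : 0 ∈ s
    · rw [if_pos h0] at h2
      exact h2.symm
    · rw [hs0 0 h0, map_zero]
  rw [mem_A0_eq hconn (projm_mem 𝒜 0 h), hz, zero_smul]

lemma phinegL_mem_neg
    (hconn : 𝒜 0 = Submodule.span R {(1 : H)})
    (hcomul : ∀ n : ℕ, ∀ h ∈ 𝒜 n,
      Coalgebra.comul (R := R) h ∈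
        ⨆ (p : ℕ × ℕ) (_ : p.1 + p.2 = n), tensorSub (𝒜 p.1) (𝒜 p.2))
    (hcompl : IsCompl Aneg Apos)
    (hTneg : ∀ a ∈ Aneg, T a = a) (hTpos : ∀ a ∈ Apos, T a = 0)
    {h : H} (hc : Coalgebra.counit (R := R) h = 0) : phinegL 𝒜 T φ h ∈ Aneg := by
  obtain ⟨s, hs, hs0⟩ := exists_sum_projm' 𝒜 h
  have h2 : phinegL 𝒜 T φ h = ∑ i ∈ s, phinegL 𝒜 T φ (projm 𝒜 i h) := by
    conv_lhs => rw [hs]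
    rw [map_sum]
  rw [h2]
  refine Submodule.sum_mem _ fun i _ => ?_
  rcases i with _ | k
  · rw [projm0_eq_zero_of_counit 𝒜 hconn hcomul hc, map_zero]
    exact Submodule.zero_mem _
  · rw [phinegL_rec 𝒜 T φ (projm_mem 𝒜 (k+1) h)]
    exact Submodule.neg_mem _ (T_mem_neg hcompl hTneg hTpos _)

lemma PhiL_mem_pos
    (hconn : 𝒜 0 = Submodule.span R {(1 : H)})
    (hcomul : ∀ n : ℕ, ∀ h ∈ 𝒜 n,
      Coalgebra.comul (R := R) h ∈
        ⨆ (p : ℕ × ℕ) (_ : p.1 + p.2 = n), tensorSub (𝒜 p.1) (𝒜 p.2))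
    (hcompl : IsCompl Aneg Apos)
    (hTneg : ∀ a ∈ Aneg, T a = a) (hTpos : ∀ a ∈ Apos, T a = 0)
    {h : H} (hc : Coalgebra.counit (R := R) h = 0) :
    convA (phinegL 𝒜 T φ) φ.toLinearMap h ∈ Apos := by
  have h1 : (1 : H) ∈ 𝒜 0 := by rw [hconn]; exact Submodule.mem_span_singleton_self 1
  obtain ⟨s, hs, hs0⟩ := exists_sum_projm' 𝒜 h
  have h2 : convA (phinegL 𝒜 T φ) φ.toLinearMap h
      = ∑ i ∈ s, convA (phinegL 𝒜 T φ) φ.toLinearMap (projm 𝒜 i h) := by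
    conv_lhs => rw [hs]
    rw [map_sum]
  rw [h2]
  refine Submodule.sum_mem _ fun i _ => ?_
  rcases i with _ | k
  · rw [projm0_eq_zero_of_counit 𝒜 hconn hcomul hc, map_zero]
    exact Submodule.zero_mem _
  · obtain ⟨-, m, f, g, d, e, s', hp, hd⟩ :=
      comul_structure 𝒜 hconn hcomul (Nat.succ_pos k) (projm_mem 𝒜 (k+1) h)
    obtain ⟨hr, hcv⟩ := phinegL_package 𝒜 T φ h1 (Nat.succ_pos k) (projm_mem 𝒜 (k+1) h) hp hd
    rw [hcv, hr, neg_add_eq_sub]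
    exact sub_T_mem_pos hcompl hTneg hTpos _

end Final

end Birkhoff

open Birkhoff

/-- Algebraic Birkhoff decomposition: let `H` be a commutative ℕ-graded connected Hopf
algebra over a field `k` of characteristic zero, `A = A₋ ⊕ A₊` a Birkhoff sum (a commutative
unital `k`-algebra, direct sum of two `k`-subspaces each closed under multiplication), `T`
the projection onto `A₋` along `A₊`, and `φ : H → A` a unital `k`-algebra homomorphism.
Then there are unital algebra homomorphisms `φ₋, φ₊ : H → A` with `φ₋(h) ∈ A₋` and
`φ₊(h) ∈ A₊` for `h ∈ Ker ε`, such that `φ = φ₋^{*−1} * φ₊` (with `φ₋^{*−1} = φ₋ ∘ S`),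
`φ₊ = φ₋ * φ`, and `φ₋` satisfies `φ₋(1) = 1` and the recursion
`φ₋(h) = −T[φ(h) + Σ φ₋(h')φ(h'')]` for `h ∈ Ker ε` with
`Δh = h ⊗ 1 + 1 ⊗ h + Σ h' ⊗ h''`. -/
theorem algebraic_birkhoff_decomposition
    {R H A : Type*} [Field R] [CharZero R] [CommRing H] [HopfAlgebra R H]
    (𝒜 : ℕ → Submodule R H)
    (hdirect : DirectSum.IsInternal 𝒜)
    (hmul : ∀ (p q : ℕ), ∀ a ∈ 𝒜 p, ∀ b ∈ 𝒜 q, a * b ∈ 𝒜 (p + q))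
    (hcomul : ∀ n : ℕ, ∀ h ∈ 𝒜 n,
      Coalgebra.comul (R := R) h ∈
        ⨆ (p : ℕ × ℕ) (_ : p.1 + p.2 = n), tensorSub (𝒜 p.1) (𝒜 p.2))
    (hconn : 𝒜 0 = Submodule.span R {(1 : H)})
    [CommRing A] [Algebra R A]
    (Aneg Apos : Submodule R A) (hcompl : IsCompl Aneg Apos)
    (hnegmul : ∀ a ∈ Aneg, ∀ b ∈ Aneg, a * b ∈ Aneg)
    (hposmul : ∀ a ∈ Apos, ∀ b ∈ Apos, a * b ∈ Apos)
    (T : A →ₗ[R] A)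
    (hTneg : ∀ a ∈ Aneg, T a = a) (hTpos : ∀ a ∈ Apos, T a = 0)
    (φ : H →ₐ[R] A) :
    ∃ φneg φpos : H →ₐ[R] A,
      (∀ h : H, Coalgebra.counit (R := R) h = 0 → φneg h ∈ Aneg ∧ φpos h ∈ Apos) ∧
      φ.toLinearMap =
        convA (φneg.toLinearMap ∘ₗ HopfAlgebra.antipode (R := R) (A := H))
          φpos.toLinearMap ∧
      φpos.toLinearMap = convA φneg.toLinearMap φ.toLinearMap ∧
      φneg 1 = 1 ∧
      (∀ h : H, Coalgebra.counit (R := R) h = 0 →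
        ∀ (m : ℕ) (f g : Fin m → H),
          Coalgebra.comul (R := R) h =
            h ⊗ₜ[R] (1 : H) + (1 : H) ⊗ₜ[R] h + ∑ i, f i ⊗ₜ[R] g i →
          φneg h = - T (φ h + ∑ i, φneg (f i) * φ (g i))) := by
  classical
  letI : DirectSum.Decomposition 𝒜 := hdirect.chooseDecomposition 𝒜
  have h1 : (1 : H) ∈ 𝒜 0 := by rw [hconn]; exact Submodule.mem_span_singleton_self 1
  have hmulall : ∀ a b : H,
      phinegL 𝒜 T φ (a * b) = phinegL 𝒜 T φ a * phinegL 𝒜 T φ b := by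
    intro a b
    obtain ⟨s, hsa, -⟩ := exists_sum_projm' 𝒜 a
    obtain ⟨t, hsb, -⟩ := exists_sum_projm' 𝒜 b
    conv_lhs => rw [hsa, hsb]
    conv_rhs => rw [hsa, hsb]
    rw [Finset.sum_mul_sum]
    simp only [map_sum]
    rw [Finset.sum_mul_sum]
    refine Finset.sum_congr rfl fun i _ => Finset.sum_congr rfl fun j _ => ?_
    exact phinegL_mul_homog 𝒜 T φ hconn hmul hcomul hcompl hnegmul hposmul hTneg hTpos
      (i + j) i j rfl _ (projm_mem 𝒜 i a) _ (projm_mem 𝒜 j b)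
  let φneg : H →ₐ[R] A :=
    AlgHom.ofLinearMap (phinegL 𝒜 T φ) (phinegL_one 𝒜 T φ h1) hmulall
  let φpos : H →ₐ[R] A :=
    (Algebra.TensorProduct.productMap φneg φ).comp (Bialgebra.comulAlgHom R H)
  have hnegco : ∀ x : H, φneg x = phinegL 𝒜 T φ x := fun _ => rfl
  have hnegL : φneg.toLinearMap = phinegL 𝒜 T φ := rfl
  have hφposL : φpos.toLinearMap = convA (phinegL 𝒜 T φ) φ.toLinearMap := by
    apply LinearMap.ext
    intro x
    show Algebra.TensorProduct.productMap φneg φ (Bialgebra.comulAlgHom R H x) = _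
    rw [Bialgebra.comulAlgHom_apply, convA, LinearMap.comp_apply, LinearMap.comp_apply]
    exact (mul'_map_algHom_pt φneg φ _).symm
  refine ⟨φneg, φpos, fun h hc => ⟨?_, ?_⟩, ?_, ?_, map_one φneg, ?_⟩
  · exact phinegL_mem_neg 𝒜 T φ hconn hcomul hcompl hTneg hTpos hc
  · have h2 : φpos h = convA (phinegL 𝒜 T φ) φ.toLinearMap h := LinearMap.congr_fun hφposL h
    rw [h2]
    exact PhiL_mem_pos 𝒜 T φ hconn hcomul hcompl hTneg hTpos hc
  · rw [hφposL, ← convA_assoc]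
    rw [show convA (φneg.toLinearMap ∘ₗ HopfAlgebra.antipode (R := R) (A := H))
        (phinegL 𝒜 T φ) = (Algebra.linearMap R A) ∘ₗ Coalgebra.counit from
      convA_antipode_left φneg]
    rw [convA_counit_unit_left]
  · rw [hφposL, hnegL]
  · intro h hc m f g hdec
    have key := congrArg (fun z => LinearMap.mul' R A
      (TensorProduct.map (phinegL 𝒜 T φ) φ.toLinearMap z)) hdec
    simp only [map_add, map_sum, TensorProduct.map_tmul, LinearMap.mul'_apply,
      AlgHom.toLinearMap_apply, map_one, mul_one] at key
    rw [phinegL_one 𝒜 T φ h1, one_mul] at key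
    have hkey2 : convA (phinegL 𝒜 T φ) φ.toLinearMap h
        = phinegL 𝒜 T φ h + (φ h + ∑ i, phinegL 𝒜 T φ (f i) * φ (g i)) := by
      rw [convA, LinearMap.comp_apply, LinearMap.comp_apply, key]
      ring
    have hTp := hTpos _ (PhiL_mem_pos 𝒜 T φ hconn hcomul hcompl hTneg hTpos hc)
    have hTn := hTneg _ (phinegL_mem_neg 𝒜 T φ hconn hcomul hcompl hTneg hTpos hc)
    simp only [hnegco]
    have hsum : φ h + ∑ i, phinegL 𝒜 T φ (f i) * φ (g i)
        = convA (phinegL 𝒜 T φ) φ.toLinearMap h - phinegL 𝒜 T φ h := by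
      rw [hkey2]
      ring
    rw [hsum, map_sub, hTp, hTn]
    ring
end
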